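/- Let b ∈ z⁻¹ℂ[[z⁻¹]] and b₁ ∈ z⁻²ℂ[[z⁻¹]]. Let E denote the inverse of the bijection C_{id−1} − Id : z⁻¹ℂ[[z⁻¹]] → z⁻²ℂ[[z⁻¹]] and let B := C_{id+b} − Id. Then for every k ≥ 0 the formal series φ̃ₖ := (E B)^k E b₁ lies in z^{−k−1}ℂ[[z⁻¹]], the series Σ_{k≥0} φ̃ₖ is formally convergent (for each n ≥ 0 only finitely many φ̃ₖ have a nonzero coefficient of z^{−n−1}), and its sum is the unique solution in z⁻¹ℂ[[z⁻¹]] of C_{id−1}φ = C_{id+b}φ + b₁. -/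

import Mathlib

open Finset
open scoped Real

noncomputable section

/-- The formal derivative `d/dz` acting on `ℂ[[z⁻¹]]`: here a power series is an
element of `PowerSeries ℂ` whose `n`-th coefficient represents the coefficient
of `z^{-n}`, and `d/dz (z^{-n}) = -n z^{-n-1}`. -/
def Dz (φ : PowerSeries ℂ) : PowerSeries ℂ :=
  PowerSeries.mk fun n => match n with
    | 0 => 0
    | m + 1 => -(m : ℂ) * PowerSeries.coeff (R := ℂ) m φ

/-- The composition operator `C_{id-1} : φ(z) ↦ φ(z-1)` on `ℂ[[z⁻¹]]`, defined by
the formal Taylor expansion `Σ_{k≥0} ((-1)^k / k!) (d/dz)^k φ`; since `(d/dz)^k`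
raises the order in `z⁻¹` by at least `k`, the `n`-th coefficient only receives
contributions from `k ≤ n`. -/
def Cm1 (φ : PowerSeries ℂ) : PowerSeries ℂ :=
  PowerSeries.mk fun n => ∑ k ∈ Finset.range (n + 1),
    ((-1 : ℂ) ^ k / (Nat.factorial k : ℂ)) * PowerSeries.coeff (R := ℂ) n (Dz^[k] φ)

/-- The composition operator `C_{id+b} : φ(z) ↦ φ(z+b(z))` on `ℂ[[z⁻¹]]`, defined
by the formal Taylor expansion `Σ_{k≥0} (b^k / k!) (d/dz)^k φ`; it is well defined
when `b ∈ z⁻¹ℂ[[z⁻¹]]`, in which case the `n`-th coefficient only receives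
contributions from `k ≤ n`. -/
def Cb (b φ : PowerSeries ℂ) : PowerSeries ℂ :=
  PowerSeries.mk fun n => ∑ k ∈ Finset.range (n + 1),
    ((Nat.factorial k : ℂ))⁻¹ * PowerSeries.coeff (R := ℂ) n (b ^ k * Dz^[k] φ)

namespace Statement1Aux

open PowerSeries

lemma coeff_Dz_succ (φ : PowerSeries ℂ) (n : ℕ) :
    coeff (R := ℂ) (n+1) (Dz φ) = -(n:ℂ) * coeff (R := ℂ) n φ := by simp [Dz]

lemma Dz_add (φ ψ : PowerSeries ℂ) : Dz (φ+ψ) = Dz φ + Dz ψ := by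
  ext n
  cases n with
  | zero => simp [Dz]
  | succ j => simp [Dz]; ring

lemma Dz_dvd {m : ℕ} {φ : PowerSeries ℂ} (h : X^m ∣ φ) : X^(m+1) ∣ Dz φ := by
  rw [X_pow_dvd_iff] at h ⊢
  intro n hn
  cases n with
  | zero => simp [Dz]
  | succ j => rw [coeff_Dz_succ, h j (by omega), mul_zero]

lemma Dz_iter_add (k : ℕ) (φ ψ : PowerSeries ℂ) :
    Dz^[k] (φ+ψ) = Dz^[k] φ + Dz^[k] ψ := by
  induction k with
  | zero => rfl
  | succ k ih => simp [Function.iterate_succ_apply', ih, Dz_add]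

lemma Dz_iter_dvd {m : ℕ} {φ : PowerSeries ℂ} (h : X^m ∣ φ) (k : ℕ) :
    X^(m+k) ∣ Dz^[k] φ := by
  induction k with
  | zero => simpa
  | succ k ih => rw [Function.iterate_succ_apply', show m+(k+1) = (m+k)+1 from rfl]
                 exact Dz_dvd ih

lemma Dz_iter_coeff_zero {φ : PowerSeries ℂ} {i : ℕ} (h : coeff (R := ℂ) i φ = 0) (k : ℕ) :
    coeff (R := ℂ) (i+k) (Dz^[k] φ) = 0 := by
  induction k with
  | zero => simpa
  | succ k ih =>
    rw [Function.iterate_succ_apply', show i+(k+1) = (i+k)+1 from rfl, coeff_Dz_succ, ih,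
      mul_zero]

lemma Cm1_add (φ ψ : PowerSeries ℂ) : Cm1 (φ+ψ) = Cm1 φ + Cm1 ψ := by
  ext n
  simp [Cm1, Dz_iter_add, mul_add, Finset.sum_add_distrib]

lemma Cb_add (b φ ψ : PowerSeries ℂ) : Cb b (φ+ψ) = Cb b φ + Cb b ψ := by
  ext n
  simp [Cb, Dz_iter_add, mul_add, Finset.sum_add_distrib]

lemma Cm1_sub (φ ψ : PowerSeries ℂ) : Cm1 (φ-ψ) = Cm1 φ - Cm1 ψ :=
  map_sub (AddMonoidHom.mk' Cm1 Cm1_add) φ ψ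

lemma Cb_sub (b φ ψ : PowerSeries ℂ) : Cb b (φ-ψ) = Cb b φ - Cb b ψ :=
  map_sub (AddMonoidHom.mk' (Cb b) (Cb_add b)) φ ψ

lemma Cm1_sum {ι : Type*} (s : Finset ι) (f : ι → PowerSeries ℂ) :
    Cm1 (∑ i ∈ s, f i) = ∑ i ∈ s, Cm1 (f i) :=
  map_sum (AddMonoidHom.mk' Cm1 Cm1_add) f s

lemma Cb_sum {ι : Type*} (b : PowerSeries ℂ) (s : Finset ι) (f : ι → PowerSeries ℂ) :
    Cb b (∑ i ∈ s, f i) = ∑ i ∈ s, Cb b (f i) :=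
  map_sum (AddMonoidHom.mk' (Cb b) (Cb_add b)) f s

lemma Cm1_dvd {m : ℕ} {φ : PowerSeries ℂ} (h : X^m ∣ φ) : X^m ∣ Cm1 φ := by
  rw [X_pow_dvd_iff] at h ⊢
  intro n hn
  rw [Cm1, coeff_mk]
  apply Finset.sum_eq_zero
  intro k _
  have := X_pow_dvd_iff.mp (Dz_iter_dvd (X_pow_dvd_iff.mpr h) k) n (by omega)
  rw [this, mul_zero]

lemma Cb_dvd {m : ℕ} {φ : PowerSeries ℂ} (b : PowerSeries ℂ) (h : X^m ∣ φ) :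
    X^m ∣ Cb b φ := by
  rw [X_pow_dvd_iff] at h ⊢
  intro n hn
  rw [Cb, coeff_mk]
  apply Finset.sum_eq_zero
  intro k _
  have hd : X^(m+k) ∣ b^k * Dz^[k] φ := Dvd.dvd.mul_left (Dz_iter_dvd (X_pow_dvd_iff.mpr h) k) _
  rw [X_pow_dvd_iff.mp hd n (by omega), mul_zero]

lemma Cm1_sub_self_dvd {m : ℕ} {φ : PowerSeries ℂ} (h : X^m ∣ φ) :
    X^(m+1) ∣ Cm1 φ - φ := by
  rw [X_pow_dvd_iff]
  intro n hn
  rw [map_sub, Cm1, coeff_mk, Finset.sum_range_succ']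
  simp only [pow_zero, Nat.factorial_zero, Nat.cast_one, div_one, one_mul,
    Function.iterate_zero, id_eq]
  rw [add_sub_cancel_right]
  apply Finset.sum_eq_zero
  intro k _
  have := X_pow_dvd_iff.mp (Dz_iter_dvd h (k+1)) n (by omega)
  rw [this, mul_zero]

lemma Cb_sub_self_dvd {m : ℕ} {b φ : PowerSeries ℂ} (hb : X ∣ b) (h : X^m ∣ φ) :
    X^(m+2) ∣ Cb b φ - φ := by
  rw [X_pow_dvd_iff]
  intro n hn
  rw [map_sub, Cb, coeff_mk, Finset.sum_range_succ']
  simp only [pow_zero, Nat.factorial_zero, Nat.cast_one, inv_one, one_mul,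
    Function.iterate_zero, id_eq]
  rw [add_sub_cancel_right]
  apply Finset.sum_eq_zero
  intro k _
  have hd : X^(m+2*(k+1)) ∣ b^(k+1) * Dz^[k+1] φ := by
    have h1 : X^(k+1) ∣ b^(k+1) := by
      simpa using pow_dvd_pow_of_dvd hb (k+1)
    have h2 : X^(m+(k+1)) ∣ Dz^[k+1] φ := Dz_iter_dvd h (k+1)
    have := mul_dvd_mul h1 h2
    rwa [← pow_add, show (k+1) + (m+(k+1)) = m + 2*(k+1) by ring] at this
  rw [X_pow_dvd_iff.mp hd n (by omega), mul_zero]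

lemma inj_lemma (φ : PowerSeries ℂ) (h0 : coeff (R := ℂ) 0 φ = 0) (m : ℕ)
    (h : X ^ (m+2) ∣ (Cm1 φ - φ)) : X ^ (m+1) ∣ φ := by
  rw [X_pow_dvd_iff] at h ⊢
  intro n
  induction n using Nat.strong_induction_on with
  | _ n ih =>
  intro hn
  cases n with
  | zero => exact h0
  | succ j =>
    have hc := h (j+2) (by omega)
    rw [map_sub, Cm1, coeff_mk, Finset.sum_range_succ', Finset.sum_range_succ'] at hc
    have hz : ∀ i ∈ Finset.range (j+1),
        ((-1:ℂ)^(i+1+1) / (Nat.factorial (i+1+1) : ℂ)) * coeff (R := ℂ) (j+2) (Dz^[i+1+1] φ) = 0 := by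
      intro i hi
      rw [Finset.mem_range] at hi
      have hcz : coeff (R := ℂ) (j - i) φ = 0 := ih (j - i) (by omega) (by omega)
      have := Dz_iter_coeff_zero hcz (i+2)
      rw [show j - i + (i+2) = j + 2 by omega] at this
      rw [show i+1+1 = i+2 from rfl, this, mul_zero]
    rw [Finset.sum_eq_zero hz] at hc
    simp only [pow_zero, Nat.factorial_zero, Nat.cast_one, div_one, Function.iterate_zero,
      id_eq, pow_one, Nat.factorial_one, Function.iterate_one, zero_add] at hc
    rw [show j + 2 = (j+1) + 1 from rfl, coeff_Dz_succ] at hc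
    have hkey : ((j:ℂ)+1) * coeff (R := ℂ) (j+1) φ = 0 := by
      push_cast at hc ⊢
      linear_combination hc
    have hj1 : ((j:ℂ)+1) ≠ 0 := by exact_mod_cast Nat.succ_ne_zero j
    exact (mul_eq_zero.mp hkey).resolve_left hj1

lemma coeff_congr_Cm1 {φ ψ : PowerSeries ℂ} {n : ℕ} (h : X^(n+1) ∣ (φ - ψ)) :
    coeff (R := ℂ) n (Cm1 φ) = coeff (R := ℂ) n (Cm1 ψ) := by
  have h2 := X_pow_dvd_iff.mp (Cm1_dvd h) n (by omega)
  rw [Cm1_sub, map_sub] at h2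
  exact sub_eq_zero.mp h2

lemma coeff_congr_Cb {b φ ψ : PowerSeries ℂ} {n : ℕ} (h : X^(n+1) ∣ (φ - ψ)) :
    coeff (R := ℂ) n (Cb b φ) = coeff (R := ℂ) n (Cb b ψ) := by
  have h2 := X_pow_dvd_iff.mp (Cb_dvd b h) n (by omega)
  rw [Cb_sub, map_sub] at h2
  exact sub_eq_zero.mp h2

end Statement1Aux
open Statement1Aux PowerSeries in
/-- with `E` the inverse of `C_{id-1} - Id : z⁻¹ℂ[[z⁻¹]] → z⁻²ℂ[[z⁻¹]]`
and `B := C_{id+b} - Id`, the series `φ̃ₖ := (E B)^k E b₁` lies in `z^{-k-1}ℂ[[z⁻¹]]`,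
the series `Σ_{k≥0} φ̃ₖ` is formally convergent, and its sum is the unique solution
in `z⁻¹ℂ[[z⁻¹]]` of `C_{id-1}φ = C_{id+b}φ + b₁`. -/
theorem statement1 (b b₁ : PowerSeries ℂ)
    (hb : PowerSeries.coeff (R := ℂ) 0 b = 0)
    (hb₁ : ∀ n < 2, PowerSeries.coeff (R := ℂ) n b₁ = 0)
    (E : PowerSeries ℂ → PowerSeries ℂ)
    (hE : ∀ ψ : PowerSeries ℂ, (∀ n < 2, PowerSeries.coeff (R := ℂ) n ψ = 0) →
      PowerSeries.coeff (R := ℂ) 0 (E ψ) = 0 ∧ Cm1 (E ψ) - E ψ = ψ) :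
    let B : PowerSeries ℂ → PowerSeries ℂ := fun φ => Cb b φ - φ
    let φk : ℕ → PowerSeries ℂ := fun k => (fun ψ => E (B ψ))^[k] (E b₁)
    let S : PowerSeries ℂ :=
      PowerSeries.mk fun n => ∑ k ∈ Finset.range n, PowerSeries.coeff (R := ℂ) n (φk k)
    (∀ k, ∀ n < k + 1, PowerSeries.coeff (R := ℂ) n (φk k) = 0) ∧
    (∀ n, {k : ℕ | PowerSeries.coeff (R := ℂ) n (φk k) ≠ 0}.Finite) ∧
    (∀ φ : PowerSeries ℂ,
      (PowerSeries.coeff (R := ℂ) 0 φ = 0 ∧ Cm1 φ = Cb b φ + b₁) ↔ φ = S) := by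
  intro B φk S
  have hBdef : ∀ ψ, B ψ = Cb b ψ - ψ := fun _ => rfl
  have hφ0 : φk 0 = E b₁ := rfl
  have hφsucc : ∀ k, φk (k+1) = E (B (φk k)) := fun k =>
    Function.iterate_succ_apply' (fun ψ => E (B ψ)) k (E b₁)
  have hScoeff : ∀ n, coeff (R := ℂ) n S = ∑ k ∈ Finset.range n, coeff (R := ℂ) n (φk k) := fun n =>
    coeff_mk n _
  have hXb : X ∣ b := by
    have : X^1 ∣ b := X_pow_dvd_iff.mpr (by
      intro n hn
      interval_cases n
      exact hb)
    simpa using this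
  have hXb₁ : X^2 ∣ b₁ := X_pow_dvd_iff.mpr hb₁
  -- orders
  have hord : ∀ k, X^(k+1) ∣ φk k := by
    intro k
    induction k with
    | zero =>
      obtain ⟨h0, heq⟩ := hE b₁ hb₁
      rw [hφ0]
      exact inj_lemma _ h0 0 (by rw [heq]; simpa using hXb₁)
    | succ k ih =>
      have hBdvd : X^(k+1+2) ∣ B (φk k) := by rw [hBdef]; exact Cb_sub_self_dvd hXb ih
      have hB2 : ∀ n < 2, coeff (R := ℂ) n (B (φk k)) = 0 := fun n hn =>
        X_pow_dvd_iff.mp (pow_dvd_pow X (by omega) |>.trans hBdvd) n hn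
      obtain ⟨h0, heq⟩ := hE _ hB2
      rw [hφsucc k]
      exact inj_lemma _ h0 (k+1) (by rw [heq]; exact hBdvd)
  have part1 : ∀ k, ∀ n < k + 1, coeff (R := ℂ) n (φk k) = 0 := fun k n hn =>
    X_pow_dvd_iff.mp (hord k) n hn
  -- per-k equations
  have hψ0 : Cm1 (φk 0) - φk 0 = b₁ := by rw [hφ0]; exact (hE b₁ hb₁).2
  have hψs : ∀ k, Cm1 (φk (k+1)) - φk (k+1) = B (φk k) := by
    intro k
    have hBdvd : X^(k+1+2) ∣ B (φk k) := by rw [hBdef]; exact Cb_sub_self_dvd hXb (hord k)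
    have hB2 : ∀ n < 2, coeff (R := ℂ) n (B (φk k)) = 0 := fun n hn =>
      X_pow_dvd_iff.mp (pow_dvd_pow X (by omega) |>.trans hBdvd) n hn
    rw [hφsucc k]
    exact (hE _ hB2).2
  have hS0 : coeff (R := ℂ) 0 S = 0 := by rw [hScoeff]; simp
  -- S solves the equation
  have hSeq : Cm1 S = Cb b S + b₁ := by
    ext n
    set SN := ∑ k ∈ Finset.range n, φk k with hSN
    have hdiff : X^(n+1) ∣ (S - SN) := by
      rw [X_pow_dvd_iff]
      intro j hj
      rw [map_sub, hScoeff j, hSN, map_sum,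
        Finset.sum_subset (Finset.range_subset_range.mpr (by omega : j ≤ n)), sub_self]
      intro k hk hk2
      rw [Finset.mem_range] at hk hk2
      exact part1 k j (by omega)
    have hc1 : coeff (R := ℂ) n (Cm1 S) = coeff (R := ℂ) n (Cm1 SN) := coeff_congr_Cm1 hdiff
    have hc2 : coeff (R := ℂ) n (Cb b S) = coeff (R := ℂ) n (Cb b SN) := coeff_congr_Cb hdiff
    have key : Cm1 SN - Cb b SN - b₁ = -(Cm1 (φk n) - φk n) := by
      have e1 : Cm1 SN - SN = ∑ k ∈ Finset.range n, (Cm1 (φk k) - φk k) := by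
        rw [hSN, Cm1_sum, Finset.sum_sub_distrib]
      have e2 : Cb b SN - SN = ∑ k ∈ Finset.range n, (Cm1 (φk (k+1)) - φk (k+1)) := by
        rw [hSN, Cb_sum, ← Finset.sum_sub_distrib]
        exact Finset.sum_congr rfl fun k _ => ((hψs k).trans (hBdef (φk k))).symm
      have e3 := Finset.sum_range_succ' (fun k => Cm1 (φk k) - φk k) n
      have e4 := Finset.sum_range_succ (fun k => Cm1 (φk k) - φk k) n
      rw [hψ0] at e3
      have : Cm1 SN - Cb b SN - b₁
          = (Cm1 SN - SN) - (Cb b SN - SN) - b₁ := by ring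
      rw [this, e1, e2]
      rw [e4] at e3
      linear_combination e3
    have := congrArg (coeff (R := ℂ) n) key
    rw [map_sub, map_sub, map_neg] at this
    have hz : coeff (R := ℂ) n (Cm1 (φk n) - φk n) = 0 :=
      X_pow_dvd_iff.mp (Cm1_sub_self_dvd (hord n)) n (by omega)
    rw [map_add, hc1, hc2]
    rw [hz, neg_zero] at this
    linear_combination this
  refine ⟨part1, ?_, ?_⟩
  · intro n
    apply Set.Finite.subset (Set.finite_Iio n)
    intro k hk
    simp only [Set.mem_setOf_eq] at hk
    simp only [Set.mem_Iio]
    by_contra hkn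
    exact hk (part1 k n (by omega))
  · intro φ
    constructor
    · rintro ⟨h0, heq⟩
      have hδ0 : coeff (R := ℂ) 0 (φ - S) = 0 := by rw [map_sub, h0, hS0, sub_zero]
      have hδeq : Cm1 (φ - S) - (φ - S) = Cb b (φ - S) - (φ - S) := by
        rw [Cm1_sub, Cb_sub, heq, hSeq]; ring
      have hdvd : ∀ m, X^(m+1) ∣ (φ - S) := by
        intro m
        induction m with
        | zero =>
          refine X_pow_dvd_iff.mpr ?_
          intro j hj
          interval_cases j
          exact hδ0
        | succ m ih =>
          have h1 : X^(m+1+2) ∣ Cm1 (φ - S) - (φ - S) := by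
            rw [hδeq]
            exact Cb_sub_self_dvd hXb ih
          exact inj_lemma _ hδ0 (m+1) h1
      have : φ - S = 0 := by
        ext j
        rw [map_zero]
        exact X_pow_dvd_iff.mp (hdvd j) j (by omega)
      exact sub_eq_zero.mp this
    · rintro rfl
      exact ⟨hS0, hSeq⟩
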